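/- (Recursive compatibility) Let {P_0,…,P_{g−1}} be a set of g n×n PDAs Blackburn-compatible w.r.t. an n×n PDA P_*, and let π be the cyclic shift l ↦ l+1 mod g on [g]. For i ∈ [g], define the gn×gn array P'_i whose diagonal blocks are P_{π^i(1)}, P_{π^i(2)}, …, P_{π^i(g)} and whose (j,k) off-diagonal block is a fixed integer-disjoint copy P_*(S_{jk}) of P_* (the same copy at the same position in every P'_i, with all copies pairwise integer-disjoint and disjoint from the integers of the P_l). Define P'_* as the gn×gn array with one common integer-disjoint copy of P_* on every diagonal block and all-∗ off-diagonal blocks. Then {P'_0, …, P'_{g−1}} is a set of g gn×gn PDAs Blackburn-compatible w.r.t. P'_*. -/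

import Mathlib

open Finset

/-- Number of stars (`none`) in column `k` of the array `P`. -/
def colStars {f K : ℕ} (P : Fin f → Fin K → Option ℕ) (k : Fin K) : ℕ :=
  (Finset.univ.filter fun j => P j k = none).card

/-- `P` is a `(K, f, Z, S)` placement delivery array: an `f × K` array over `{∗} ∪ S`
(`none` encodes `∗`) with exactly `Z` stars in each column, every integer of `S`
occurring at least once (and all integer entries lying in `S`), satisfying the
Blackburn property. -/
def IsPDA {f K : ℕ} (P : Fin f → Fin K → Option ℕ) (Z : ℕ) (S : Finset ℕ) : Prop :=
  (∀ k, colStars P k = Z) ∧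
  (∀ s ∈ S, ∃ j k, P j k = some s) ∧
  (∀ j k s, P j k = some s → s ∈ S) ∧
  (∀ j₁ k₁ j₂ k₂ s, (j₁, k₁) ≠ (j₂, k₂) →
    P j₁ k₁ = some s → P j₂ k₂ = some s → P j₁ k₂ = none ∧ P j₂ k₁ = none)

/-- Every integer of `S` appears exactly `g` times in the array `P`. -/
def IsRegularPDA {f K : ℕ} (P : Fin f → Fin K → Option ℕ) (S : Finset ℕ) (g : ℕ) : Prop :=
  ∀ s ∈ S, ((Finset.univ : Finset (Fin f × Fin K)).filter
    (fun jk => P jk.1 jk.2 = some s)).card = g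

/-- `P₀` and `P₁` are Blackburn-compatible with respect to `Pstar`. -/
def BBCompat {n m : ℕ} (P₀ P₁ Pstar : Fin n → Fin m → Option ℕ) : Prop :=
  ∀ i₀ j₀ i₁ j₁ s, P₀ i₀ j₀ = some s → P₁ i₁ j₁ = some s →
    Pstar i₀ j₁ = none ∧ Pstar i₁ j₀ = none

/-- `Ig n t` is the `n × n` array with the integer `t` on the main diagonal and `∗`
elsewhere. -/
def Ig (n t : ℕ) : Fin n → Fin n → Option ℕ := fun i j => if i = j then some t else none

/-- Block-row index of a global index for an array built from `a × a` grids of `b`-sized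
blocks. -/
def blkIdx {a b : ℕ} (j : Fin (a * b)) : Fin a :=
  ⟨(j : ℕ) / b, Nat.div_lt_of_lt_mul (Nat.mul_comm a b ▸ j.isLt)⟩

/-- Within-block index of a global index. -/
def inIdx {a b : ℕ} (j : Fin (a * b)) : Fin b :=
  ⟨(j : ℕ) % b, Nat.mod_lt _ (by
    rcases Nat.eq_zero_or_pos b with h | h
    · exact absurd j.isLt (by simp [h])
    · exact h)⟩

/-- `liftShift P Pstar φ i` is the `gn × gn` array `P'_i`: diagonal block `k` carries
`P (k + i)` (cyclic shift of the diagonal blocks) and off-diagonal block `(j,k)` carries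
the fixed integer-disjoint copy of `Pstar` relabeled by `φ j k` (the same copy at the
same position in every `P'_i`). -/
def liftShift {n g : ℕ} (P : Fin g → Fin n → Fin n → Option ℕ)
    (Pstar : Fin n → Fin n → Option ℕ) (φ : Fin g → Fin g → ℕ → ℕ) (i : Fin g) :
    Fin (g * n) → Fin (g * n) → Option ℕ :=
  fun x y =>
    if blkIdx x = blkIdx y then P (blkIdx x + i) (inIdx x) (inIdx y)
    else (Pstar (inIdx x) (inIdx y)).map (φ (blkIdx x) (blkIdx y))

/-- `diagStar Pstar ψ` is the `gn × gn` array `P'_*`: one common integer-disjoint copy of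
`Pstar` (relabeled by `ψ`) on every diagonal block and all-`∗` off-diagonal blocks. -/
def diagStar {n : ℕ} (g : ℕ) (Pstar : Fin n → Fin n → Option ℕ) (ψ : ℕ → ℕ) :
    Fin (g * n) → Fin (g * n) → Option ℕ :=
  fun x y => if blkIdx x = blkIdx y then (Pstar (inIdx x) (inIdx y)).map ψ else none

def mkIdx {a b : ℕ} (B : Fin a) (r : Fin b) : Fin (a * b) :=
  ⟨(r : ℕ) + b * B, by
    calc (r : ℕ) + b * B < b + b * B := by omega
    _ = b * (B + 1) := by ring
    _ ≤ b * a := Nat.mul_le_mul_left _ B.isLt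
    _ = a * b := Nat.mul_comm _ _⟩

@[simp] lemma blkIdx_mkIdx {a b : ℕ} (B : Fin a) (r : Fin b) : blkIdx (mkIdx B r) = B := by
  have hb : 0 < b := r.pos
  apply Fin.ext
  show ((r : ℕ) + b * B) / b = B
  rw [Nat.add_mul_div_left _ _ hb, Nat.div_eq_of_lt r.isLt, Nat.zero_add]

@[simp] lemma inIdx_mkIdx {a b : ℕ} (B : Fin a) (r : Fin b) : inIdx (mkIdx B r) = r := by
  apply Fin.ext
  simp [inIdx, mkIdx, Nat.add_mul_mod_self_left, Nat.mod_eq_of_lt r.isLt]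

lemma mkIdx_blk_in {a b : ℕ} (x : Fin (a * b)) : mkIdx (blkIdx x) (inIdx x) = x := by
  apply Fin.ext
  simp [mkIdx, blkIdx, inIdx, Nat.mod_add_div]

lemma idx_ext {a b : ℕ} {x y : Fin (a * b)} (h1 : blkIdx x = blkIdx y)
    (h2 : inIdx x = inIdx y) : x = y := by
  rw [← mkIdx_blk_in x, ← mkIdx_blk_in y, h1, h2]

lemma liftShift_some {n g : ℕ} {P : Fin g → Fin n → Fin n → Option ℕ}
    {Pstar : Fin n → Fin n → Option ℕ} {φ : Fin g → Fin g → ℕ → ℕ} {i : Fin g}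
    {x y : Fin (g * n)} {s : ℕ} (h : liftShift P Pstar φ i x y = some s) :
    (blkIdx x = blkIdx y ∧ P (blkIdx x + i) (inIdx x) (inIdx y) = some s) ∨
    (blkIdx x ≠ blkIdx y ∧ ∃ t, Pstar (inIdx x) (inIdx y) = some t ∧
      φ (blkIdx x) (blkIdx y) t = s) := by
  unfold liftShift at h
  by_cases hb : blkIdx x = blkIdx y
  · rw [if_pos hb] at h; exact Or.inl ⟨hb, h⟩
  · rw [if_neg hb] at h
    obtain ⟨t, ht, hts⟩ := Option.map_eq_some_iff.1 h
    exact Or.inr ⟨hb, t, ht, hts⟩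

lemma liftShift_off_none {n g : ℕ} {P : Fin g → Fin n → Fin n → Option ℕ}
    {Pstar : Fin n → Fin n → Option ℕ} {φ : Fin g → Fin g → ℕ → ℕ} {i : Fin g}
    {x y : Fin (g * n)} (hb : blkIdx x ≠ blkIdx y)
    (h : Pstar (inIdx x) (inIdx y) = none) :
    liftShift P Pstar φ i x y = none := by
  unfold liftShift; rw [if_neg hb, h]; rfl

lemma liftShift_diag_eq {n g : ℕ} {P : Fin g → Fin n → Fin n → Option ℕ}
    {Pstar : Fin n → Fin n → Option ℕ} {φ : Fin g → Fin g → ℕ → ℕ} {i : Fin g}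
    {x y : Fin (g * n)} (hb : blkIdx x = blkIdx y) :
    liftShift P Pstar φ i x y = P (blkIdx x + i) (inIdx x) (inIdx y) := by
  unfold liftShift; rw [if_pos hb]

lemma diagStar_none_of {n g : ℕ} {Pstar : Fin n → Fin n → Option ℕ} {ψ : ℕ → ℕ}
    {x y : Fin (g * n)} (h : Pstar (inIdx x) (inIdx y) = none) :
    diagStar g Pstar ψ x y = none := by
  unfold diagStar; split <;> simp [h]

lemma diagStar_off_none {n g : ℕ} {Pstar : Fin n → Fin n → Option ℕ} {ψ : ℕ → ℕ}
    {x y : Fin (g * n)} (h : blkIdx x ≠ blkIdx y) :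
    diagStar g Pstar ψ x y = none := by
  unfold diagStar; rw [if_neg h]

lemma filter_card_blocks {a b : ℕ} (p : Fin (a * b) → Prop) [DecidablePred p] :
    (Finset.univ.filter p).card
      = ∑ B : Fin a, (Finset.univ.filter fun r : Fin b => p (mkIdx B r)).card := by
  have h : (Finset.univ.filter fun z : Fin a × Fin b => p (mkIdx z.1 z.2)).card
      = (Finset.univ.filter p).card := by
    apply Finset.card_bij (fun z _ => mkIdx z.1 z.2)
    · intro z hz
      exact Finset.mem_filter.2 ⟨Finset.mem_univ _, (Finset.mem_filter.1 hz).2⟩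
    · intro z1 h1 z2 h2 h
      have e1 : z1.1 = z2.1 := by rw [← blkIdx_mkIdx z1.1 z1.2, h, blkIdx_mkIdx]
      have e2 : z1.2 = z2.2 := by rw [← inIdx_mkIdx z1.1 z1.2, h, inIdx_mkIdx]
      exact Prod.ext e1 e2
    · intro x hx
      refine ⟨(blkIdx x, inIdx x), Finset.mem_filter.2 ⟨Finset.mem_univ _, ?_⟩,
        mkIdx_blk_in x⟩
      rw [mkIdx_blk_in]
      exact (Finset.mem_filter.1 hx).2
  rw [← h, Finset.card_filter, Fintype.sum_prod_type]
  refine Finset.sum_congr rfl fun B _ => ?_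
  rw [Finset.card_filter]

/-- **Recursive compatibility.** Given `g` `(n, n, Zc)` PDAs `P l`
pairwise Blackburn-compatible w.r.t. the `(n, n, Zs, Ss)` PDA `Pstar`, the arrays
`P'_i = liftShift P Pstar φ i` (with all off-diagonal copies pairwise integer-disjoint
and disjoint from the integers of the `P l` and of the diagonal copy of `P'_*`) form a
set of `g` `gn × gn` PDAs pairwise Blackburn-compatible w.r.t.
`P'_* = diagStar g Pstar ψ`. -/
theorem stmt_16 {n g Zc Zs : ℕ}
    (P : Fin g → Fin n → Fin n → Option ℕ) (Sl : Fin g → Finset ℕ)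
    (Pstar : Fin n → Fin n → Option ℕ) (Ss : Finset ℕ)
    (hP : ∀ l, IsPDA (P l) Zc (Sl l))
    (hstar : IsPDA Pstar Zs Ss)
    (hcompat : ∀ l l', l ≠ l' → BBCompat (P l) (P l') Pstar)
    (φ : Fin g → Fin g → ℕ → ℕ) (ψ : ℕ → ℕ)
    (hinjφ : ∀ j k, Set.InjOn (φ j k) ↑Ss)
    (hinjψ : Set.InjOn ψ ↑Ss)
    (hφdisj : ∀ j k j' k' : Fin g, (j, k) ≠ (j', k') →
      Disjoint (Ss.image (φ j k)) (Ss.image (φ j' k')))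
    (hφS : ∀ j k l, Disjoint (Ss.image (φ j k)) (Sl l))
    (hψS : ∀ l, Disjoint (Ss.image ψ) (Sl l))
    (hψφ : ∀ j k, Disjoint (Ss.image ψ) (Ss.image (φ j k))) :
    (∀ i, IsPDA (liftShift P Pstar φ i) (Zc + (g - 1) * Zs)
      ((Finset.univ.biUnion Sl) ∪
        (((Finset.univ : Finset (Fin g × Fin g)).filter fun p => p.1 ≠ p.2).biUnion
          fun p => Ss.image (φ p.1 p.2)))) ∧
    (∀ i i', i ≠ i' →
      BBCompat (liftShift P Pstar φ i) (liftShift P Pstar φ i') (diagStar g Pstar ψ)) := by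
  classical
  obtain ⟨hZs, hoccS, hmemS, hbbS⟩ := hstar
  -- mixed-case contradiction: an integer of a φ-copy never lies in any Sl l
  have mixed : ∀ (B B' : Fin g) (t : ℕ) (l : Fin g), t ∈ Ss → φ B B' t ∈ Sl l → False := by
    intro B B' t l ht hs
    exact Finset.disjoint_left.1 (hφS B B' l) (Finset.mem_image_of_mem _ ht) hs
  -- matching integers of two φ-copies force equal copies and equal preimages
  have offmatch : ∀ (B B' C C' : Fin g) (t u : ℕ), t ∈ Ss → u ∈ Ss →
      φ B B' t = φ C C' u → B = C ∧ B' = C' ∧ t = u := by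
    intro B B' C C' t u ht hu h
    by_cases hpq : ((B, B') : Fin g × Fin g) = (C, C')
    · rw [Prod.mk.injEq] at hpq
      obtain ⟨rfl, rfl⟩ := hpq
      exact ⟨rfl, rfl, hinjφ B B' ht hu h⟩
    · exfalso
      refine Finset.disjoint_left.1 (hφdisj B B' C C' hpq)
        (Finset.mem_image_of_mem _ ht) ?_
      rw [h]
      exact Finset.mem_image_of_mem _ hu
  constructor
  · intro i
    haveI : NeZero g := ⟨i.pos.ne'⟩
    refine ⟨?_, ?_, ?_, ?_⟩
    · -- column star count
      intro y
      unfold colStars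
      rw [filter_card_blocks]
      have heval : ∀ B : Fin g,
          (Finset.univ.filter fun r : Fin n =>
            liftShift P Pstar φ i (mkIdx B r) y = none).card
          = if B = blkIdx y then Zc else Zs := by
        intro B
        by_cases hB : B = blkIdx y
        · rw [if_pos hB]
          have hcongr : ∀ r : Fin n,
              liftShift P Pstar φ i (mkIdx B r) y = P (blkIdx y + i) r (inIdx y) := by
            intro r
            unfold liftShift
            rw [if_pos (by rw [blkIdx_mkIdx, hB]), blkIdx_mkIdx, inIdx_mkIdx, hB]
          rw [Finset.filter_congr (fun r _ => by rw [hcongr r])]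
          exact (hP (blkIdx y + i)).1 (inIdx y)
        · rw [if_neg hB]
          have hcongr : ∀ r : Fin n,
              (liftShift P Pstar φ i (mkIdx B r) y = none) ↔
              (Pstar r (inIdx y) = none) := by
            intro r
            unfold liftShift
            rw [if_neg (by rw [blkIdx_mkIdx]; exact hB), blkIdx_mkIdx, inIdx_mkIdx,
              Option.map_eq_none_iff]
          rw [Finset.filter_congr (fun r _ => hcongr r)]
          exact hZs (inIdx y)
      rw [Finset.sum_congr rfl fun B _ => heval B,
        ← Finset.add_sum_erase _ _ (Finset.mem_univ (blkIdx y)), if_pos rfl]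
      congr 1
      rw [Finset.sum_congr rfl fun B hB => if_neg (Finset.ne_of_mem_erase hB),
        Finset.sum_const, Finset.card_erase_of_mem (Finset.mem_univ _),
        Finset.card_univ, Fintype.card_fin, smul_eq_mul]
    · -- every integer occurs
      intro s hs
      rcases Finset.mem_union.1 hs with hs | hs
      · obtain ⟨l, -, hl⟩ := Finset.mem_biUnion.1 hs
        obtain ⟨j, k, hjk⟩ := (hP l).2.1 s hl
        refine ⟨mkIdx (l - i) j, mkIdx (l - i) k, ?_⟩
        rw [liftShift_diag_eq (by rw [blkIdx_mkIdx, blkIdx_mkIdx]),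
          blkIdx_mkIdx, inIdx_mkIdx, inIdx_mkIdx, sub_add_cancel]
        exact hjk
      · obtain ⟨p, hp, hs⟩ := Finset.mem_biUnion.1 hs
        have hp' : p.1 ≠ p.2 := (Finset.mem_filter.1 hp).2
        obtain ⟨t, ht, rfl⟩ := Finset.mem_image.1 hs
        obtain ⟨j, k, hjk⟩ := hoccS t ht
        refine ⟨mkIdx p.1 j, mkIdx p.2 k, ?_⟩
        unfold liftShift
        rw [if_neg (by rw [blkIdx_mkIdx, blkIdx_mkIdx]; exact hp'),
          blkIdx_mkIdx, blkIdx_mkIdx, inIdx_mkIdx, inIdx_mkIdx, hjk]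
        rfl
    · -- all integers lie in S
      intro x y s hxy
      rcases liftShift_some hxy with ⟨hb, h⟩ | ⟨hb, t, ht, hts⟩
      · exact Finset.mem_union_left _ (Finset.mem_biUnion.2
          ⟨blkIdx x + i, Finset.mem_univ _, (hP _).2.2.1 _ _ _ h⟩)
      · refine Finset.mem_union_right _ (Finset.mem_biUnion.2
          ⟨(blkIdx x, blkIdx y), Finset.mem_filter.2 ⟨Finset.mem_univ _, hb⟩, ?_⟩)
        rw [← hts]
        exact Finset.mem_image_of_mem _ (hmemS _ _ _ ht)
    · -- Blackburn property
      intro x₁ y₁ x₂ y₂ s hne h1 h2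
      rcases liftShift_some h1 with ⟨hb1, e1⟩ | ⟨hb1, t1, e1, f1⟩ <;>
        rcases liftShift_some h2 with ⟨hb2, e2⟩ | ⟨hb2, t2, e2, f2⟩
      · -- both diagonal
        by_cases hBB : blkIdx x₁ = blkIdx x₂
        · -- same diagonal block: use Blackburn of P l
          rw [← hBB] at e2
          have hin : ((inIdx x₁, inIdx y₁) : Fin n × Fin n) ≠ (inIdx x₂, inIdx y₂) := by
            intro hc
            obtain ⟨c1, c2⟩ := Prod.ext_iff.1 hc
            exact hne (Prod.ext_iff.2 ⟨idx_ext hBB c1,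
              idx_ext (by rw [← hb1, ← hb2, hBB]) c2⟩)
          have hres := (hP (blkIdx x₁ + i)).2.2.2 (inIdx x₁) (inIdx y₁) (inIdx x₂)
            (inIdx y₂) s hin e1 e2
          constructor
          · rw [liftShift_diag_eq (hBB.trans hb2)]
            exact hres.1
          · rw [liftShift_diag_eq (hBB.symm.trans hb1), ← hBB]
            exact hres.2
        · -- different diagonal blocks: use pairwise compatibility
          have hll : blkIdx x₁ + i ≠ blkIdx x₂ + i := fun hc => hBB (add_right_cancel hc)
          have hres := hcompat _ _ hll _ _ _ _ s e1 e2
          exact ⟨liftShift_off_none (by rw [← hb2]; exact hBB) hres.1,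
            liftShift_off_none (by rw [← hb1]; exact fun hc => hBB hc.symm) hres.2⟩
      · -- diagonal vs off-diagonal: impossible
        exfalso
        have hmem := (hP _).2.2.1 _ _ _ e1
        rw [← f2] at hmem
        exact mixed _ _ _ _ (hmemS _ _ _ e2) hmem
      · exfalso
        have hmem := (hP _).2.2.1 _ _ _ e2
        rw [← f1] at hmem
        exact mixed _ _ _ _ (hmemS _ _ _ e1) hmem
      · -- both off-diagonal
        obtain ⟨hc1, hc2, rfl⟩ := offmatch _ _ _ _ _ _ (hmemS _ _ _ e1) (hmemS _ _ _ e2)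
          (f1.trans f2.symm)
        have hin : ((inIdx x₁, inIdx y₁) : Fin n × Fin n) ≠ (inIdx x₂, inIdx y₂) := by
          intro hc
          obtain ⟨c1, c2⟩ := Prod.ext_iff.1 hc
          exact hne (Prod.ext_iff.2 ⟨idx_ext hc1 c1, idx_ext hc2 c2⟩)
        have hres := hbbS (inIdx x₁) (inIdx y₁) (inIdx x₂) (inIdx y₂) _ hin e1 e2
        exact ⟨liftShift_off_none (by rw [← hc2]; exact hb1) hres.1,
          liftShift_off_none (by rw [← hc1]; exact hb1) hres.2⟩
  · -- pairwise Blackburn compatibility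
    intro i i' hii x₀ y₀ x₁ y₁ s h0 h1
    haveI : NeZero g := ⟨i.pos.ne'⟩
    rcases liftShift_some h0 with ⟨hb0, e0⟩ | ⟨hb0, t0, e0, f0⟩ <;>
      rcases liftShift_some h1 with ⟨hb1, e1⟩ | ⟨hb1, t1, e1, f1⟩
    · -- both diagonal
      by_cases hll : blkIdx x₀ + i = blkIdx x₁ + i'
      · have hBB : blkIdx x₀ ≠ blkIdx x₁ := by
          intro hc; rw [hc] at hll; exact hii (add_left_cancel hll)
        exact ⟨diagStar_off_none (by rw [← hb1]; exact hBB),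
          diagStar_off_none (by rw [← hb0]; exact fun hc => hBB hc.symm)⟩
      · have hres := hcompat _ _ hll _ _ _ _ s e0 e1
        exact ⟨diagStar_none_of hres.1, diagStar_none_of hres.2⟩
    · exfalso
      have hmem := (hP _).2.2.1 _ _ _ e0
      rw [← f1] at hmem
      exact mixed _ _ _ _ (hmemS _ _ _ e1) hmem
    · exfalso
      have hmem := (hP _).2.2.1 _ _ _ e1
      rw [← f0] at hmem
      exact mixed _ _ _ _ (hmemS _ _ _ e0) hmem
    · obtain ⟨hc1, hc2, rfl⟩ := offmatch _ _ _ _ _ _ (hmemS _ _ _ e0) (hmemS _ _ _ e1)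
        (f0.trans f1.symm)
      exact ⟨diagStar_off_none (by rw [← hc2]; exact hb0),
        diagStar_off_none (by rw [← hc1]; exact hb0)⟩
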